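/- The program 'for(i=0; i<N; i++){ for(j=0; j<N; j++){ if(v[i] < v[j]) swap(v[i], v[j]) } }' sorts any vector v of length N into increasing order, and performs at most N² comparisons. -/

import Mathlib

/-- One step of the double-loop sorting program: given the pair `(i, j)`,
compare `v i < v j` and swap the two entries if the comparison succeeds. -/
def sortStep {N : ℕ} (v : Fin N → ℤ) (p : Fin N × Fin N) : Fin N → ℤ :=
  if v p.1 < v p.2 then v ∘ Equiv.swap p.1 p.2 else v

/-- All pairs `(i, j) ∈ Fin N × Fin N` in lexicographic order: the iteration
order of `for(i=0;i<N;i++){ for(j=0;j<N;j++){ … } }`. -/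
def lexPairs (N : ℕ) : List (Fin N × Fin N) :=
  (List.finRange N).flatMap fun i => (List.finRange N).map fun j => (i, j)

namespace DLS

lemma foldl_flatMap {α β γ : Type*} (f : γ → β → γ) (g : α → List β) (l : List α) (init : γ) :
    (l.flatMap g).foldl f init = l.foldl (fun c a => (g a).foldl f c) init := by
  induction l generalizing init with
  | nil => rfl
  | cons a l ih => simp [List.flatMap_cons, List.foldl_append, ih]

lemma perm_fold {N : ℕ} (l : List (Fin N × Fin N)) :
    ∀ v : Fin N → ℤ, ∃ σ : Equiv.Perm (Fin N), l.foldl sortStep v = v ∘ σ := by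
  induction l with
  | nil => exact fun v => ⟨1, rfl⟩
  | cons p l ih =>
    intro v
    rw [List.foldl_cons]
    unfold sortStep
    by_cases h : v p.1 < v p.2
    · rw [if_pos h]
      obtain ⟨σ, hσ⟩ := ih (v ∘ Equiv.swap p.1 p.2)
      exact ⟨σ.trans (Equiv.swap p.1 p.2), hσ⟩
    · rw [if_neg h]
      exact ih v

variable {N : ℕ} (T : ℤ)

/-- Invariant of the inner loop at row `i`, after processing `j ∈ [0, m)`. -/
def Inv (i : Fin N) (m : ℕ) (w : Fin N → ℤ) : Prop :=
  (∀ a b : Fin N, a ≤ b → b < i → w a ≤ w b) ∧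
  (∀ a : Fin N, (a : ℕ) < m → a < i → w a ≤ w i) ∧
  (∀ a, w a ≤ T) ∧
  (∃ b : Fin N, w b = T ∧ (b = i ∨ (m ≤ (b : ℕ) ∧ (b ≤ i ∨ (i : ℕ) = 0))))

lemma step_inv (i : Fin N) (m : ℕ) (hm : m < N) (w : Fin N → ℤ)
    (h : Inv T i m w) : Inv T i (m + 1) (sortStep w (i, ⟨m, hm⟩)) := by
  obtain ⟨S, L, B, M⟩ := h
  set j : Fin N := ⟨m, hm⟩ with hj
  unfold sortStep
  by_cases hlt : w i < w j
  · simp only [if_pos hlt]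
    have hij : i ≠ j := by rintro rfl; exact lt_irrefl _ hlt
    have wi : (w ∘ Equiv.swap i j) i = w j := by simp
    have wj : (w ∘ Equiv.swap i j) j = w i := by simp
    have wo : ∀ a : Fin N, a ≠ i → a ≠ j → (w ∘ Equiv.swap i j) a = w a := by
      intro a h1 h2; simp [Equiv.swap_apply_of_ne_of_ne h1 h2]
    refine ⟨?_, ?_, ?_, ?_⟩
    · -- sortedness of prefix [0, i)
      intro a b hab hbi
      have hai : a < i := lt_of_le_of_lt hab hbi
      have hane : a ≠ i := Fin.ne_of_lt hai
      have hbne : b ≠ i := Fin.ne_of_lt hbi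
      by_cases haj : a = j
      · by_cases hbj : b = j
        · subst haj; subst hbj; exact le_rfl
        · rw [haj, wj, wo b hbne hbj]
          exact le_of_lt (lt_of_lt_of_le hlt (S j b (haj ▸ hab) hbi))
      · by_cases hbj : b = j
        · rw [hbj, wj, wo a hane haj]
          have haltj : a < j := lt_of_le_of_ne (hbj ▸ hab) haj
          exact L a haltj hai
        · rw [wo a hane haj, wo b hbne hbj]; exact S a b hab hbi
    · -- L for m+1
      intro a ham hai
      rw [wi]
      have hane : a ≠ i := Fin.ne_of_lt hai
      by_cases haj : a = j
      · rw [haj, wj]; exact le_of_lt hlt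
      · have ham' : (a : ℕ) < m := by
          have : (a : ℕ) ≠ m := fun hh => haj (Fin.ext hh)
          omega
        rw [wo a hane haj]
        exact le_of_lt (lt_of_le_of_lt (L a ham' hai) hlt)
    · intro a; exact B _
    · obtain ⟨b, hbT, hb⟩ := M
      rcases hb with rfl | ⟨hmb, hbi⟩
      · exact absurd (lt_of_lt_of_le hlt (hbT ▸ B j)) (lt_irrefl _)
      · by_cases hbi' : b = i
        · subst hbi'
          exact absurd (lt_of_lt_of_le hlt (hbT ▸ B j)) (lt_irrefl _)
        · by_cases hbj : b = j
          · exact ⟨i, by rw [wi, ← hbj, hbT], Or.inl rfl⟩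
          · refine ⟨b, by rw [wo b hbi' hbj]; exact hbT, Or.inr ⟨?_, hbi⟩⟩
            have : (b : ℕ) ≠ m := fun hh => hbj (Fin.ext hh)
            omega
  · simp only [if_neg hlt]
    have hji : w j ≤ w i := not_lt.1 hlt
    refine ⟨S, ?_, B, ?_⟩
    · intro a ham hai
      by_cases ham' : (a : ℕ) < m
      · exact L a ham' hai
      · have hval : (a : ℕ) = m := by omega
        have : a = j := Fin.ext hval
        rw [this]; exact hji
    · obtain ⟨b, hbT, hb⟩ := M
      rcases hb with rfl | ⟨hmb, hbi⟩
      · exact ⟨b, hbT, Or.inl rfl⟩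
      · by_cases hbj : (b : ℕ) = m
        · have hbj' : b = j := Fin.ext hbj
          refine ⟨i, le_antisymm (B i) ?_, Or.inl rfl⟩
          rw [← hbT, hbj']; exact hji
        · exact ⟨b, hbT, Or.inr ⟨by omega, hbi⟩⟩

lemma inner_inv (i : Fin N) :
    ∀ (l : List (Fin N)) (m : ℕ) (w : Fin N → ℤ), l = (List.finRange N).drop m →
      Inv T i m w → Inv T i N (l.foldl (fun w j => sortStep w (i, j)) w) := by
  intro l
  induction l with
  | nil =>
    intro m w hl ⟨S, L, B, M⟩
    have hm : N ≤ m := by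
      by_contra hc
      push_neg at hc
      have := List.drop_eq_getElem_cons (l := List.finRange N) (i := m) (by simpa using hc)
      rw [← hl] at this
      exact List.cons_ne_nil _ _ this.symm
    refine ⟨S, fun a _ hai => L a (lt_of_lt_of_le a.isLt hm) hai, B, ?_⟩
    obtain ⟨b, hbT, hb⟩ := M
    rcases hb with rfl | ⟨hmb, _⟩
    · exact ⟨b, hbT, Or.inl rfl⟩
    · exact absurd (lt_of_lt_of_le b.isLt hm) (not_lt.2 hmb)
  | cons a l ih =>
    intro m w hl hInv
    have hm : m < N := by
      by_contra hc
      push_neg at hc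
      rw [List.drop_eq_nil_of_le (by simpa using hc)] at hl
      exact List.cons_ne_nil _ _ hl
    have hdrop := List.drop_eq_getElem_cons (l := List.finRange N) (i := m) (by simpa using hm)
    rw [hdrop] at hl
    have ha : a = ⟨m, hm⟩ := by
      have := (List.cons.injEq _ _ _ _).mp hl
      rw [this.1, List.getElem_finRange]
      rfl
    have hl' : l = (List.finRange N).drop (m + 1) := ((List.cons.injEq _ _ _ _).mp hl).2
    rw [List.foldl_cons, ha]
    exact ih (m + 1) _ hl' (step_inv T i m hm w hInv)

/-- Invariant of the outer loop after processing rows `i ∈ [0, m)`. -/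
def RowInv (m : ℕ) (w : Fin N → ℤ) : Prop :=
  (∀ a b : Fin N, a ≤ b → (b : ℕ) < m → w a ≤ w b) ∧
  (∀ a, w a ≤ T) ∧
  (∃ b, w b = T) ∧
  (∀ (hm : m - 1 < N), 0 < m → w ⟨m - 1, hm⟩ = T)

lemma row_step (m : ℕ) (hm : m < N) (w : Fin N → ℤ) (h : RowInv T m w) :
    RowInv T (m + 1)
      ((List.finRange N).foldl (fun w j => sortStep w ((⟨m, hm⟩ : Fin N), j)) w) := by
  obtain ⟨S, B, A, P⟩ := h
  set i : Fin N := ⟨m, hm⟩ with hi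
  have h0 : Inv T i 0 w := by
    refine ⟨fun a b hab hbi => S a b hab hbi, fun a ham _ => absurd ham (Nat.not_lt_zero _), B, ?_⟩
    rcases Nat.eq_zero_or_pos m with hm0 | hm0
    · obtain ⟨b, hbT⟩ := A
      exact ⟨b, hbT, Or.inr ⟨Nat.zero_le _, Or.inr hm0⟩⟩
    · refine ⟨⟨m - 1, by omega⟩, P (by omega) hm0, Or.inr ⟨Nat.zero_le _, Or.inl ?_⟩⟩
      exact Fin.mk_le_mk.2 (by omega)
  have hN := inner_inv T i (List.finRange N) 0 w List.drop_zero.symm h0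
  obtain ⟨S', L', B', M'⟩ := hN
  set w' := (List.finRange N).foldl (fun w j => sortStep w (i, j)) w with hw'
  have hwi : w' i = T := by
    obtain ⟨b, hbT, hb⟩ := M'
    rcases hb with rfl | ⟨hmb, _⟩
    · exact hbT
    · exact absurd (lt_of_lt_of_le b.isLt hmb) (lt_irrefl _)
  refine ⟨?_, B', ⟨i, hwi⟩, ?_⟩
  · intro a b hab hbm
    rcases Nat.lt_or_ge (b : ℕ) m with hbm' | hbm'
    · exact S' a b hab hbm'
    · have hval : (b : ℕ) = m := by omega
      have hbi : b = i := Fin.ext hval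
      subst hbi
      rcases eq_or_lt_of_le hab with rfl | hab'
      · exact le_rfl
      · exact L' a a.isLt hab'
  · intro hm' _
    have : (⟨m + 1 - 1, hm'⟩ : Fin N) = i := Fin.ext (by simp [hi])
    rw [this, hwi]

lemma outer_inv :
    ∀ (l : List (Fin N)) (m : ℕ) (w : Fin N → ℤ), l = (List.finRange N).drop m → m ≤ N →
      RowInv T m w →
      RowInv T N (l.foldl
        (fun w i => (List.finRange N).foldl (fun w j => sortStep w (i, j)) w) w) := by
  intro l
  induction l with
  | nil =>
    intro m w hl hmN ⟨S, B, A, P⟩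
    have hm : N ≤ m := by
      by_contra hc
      push_neg at hc
      have := List.drop_eq_getElem_cons (l := List.finRange N) (i := m) (by simpa using hc)
      rw [← hl] at this
      exact List.cons_ne_nil _ _ this.symm
    have hmeq : m = N := le_antisymm hmN hm
    subst hmeq
    exact ⟨fun a b hab _ => S a b hab b.isLt, B, A, P⟩
  | cons a l ih =>
    intro m w hl hmN hInv
    have hm : m < N := by
      by_contra hc
      push_neg at hc
      rw [List.drop_eq_nil_of_le (by simpa using hc)] at hl
      exact List.cons_ne_nil _ _ hl
    have hdrop := List.drop_eq_getElem_cons (l := List.finRange N) (i := m) (by simpa using hm)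
    rw [hdrop] at hl
    have ha : a = ⟨m, hm⟩ := by
      have := (List.cons.injEq _ _ _ _).mp hl
      rw [this.1, List.getElem_finRange]
      rfl
    have hl' : l = (List.finRange N).drop (m + 1) := ((List.cons.injEq _ _ _ _).mp hl).2
    rw [List.foldl_cons, ha]
    exact ih (m + 1) _ hl' hm (row_step T m hm w hInv)

lemma fold_eq (v : Fin N → ℤ) :
    (lexPairs N).foldl sortStep v =
      (List.finRange N).foldl
        (fun w i => (List.finRange N).foldl (fun w j => sortStep w (i, j)) w) v := by
  rw [lexPairs, foldl_flatMap]
  congr 1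
  funext w i
  rw [List.foldl_map]

end DLS

/-- The program `for(i=0;i<N;i++){ for(j=0;j<N;j++){ if(v[i]<v[j])
swap(v[i],v[j]) } }` sorts any vector of length `N` into non-decreasing order:
the result is a permutation of the input and is monotone; moreover it performs
exactly `N²` comparisons (one per iterated pair), hence at most `N²`. -/
theorem double_loop_sorts
    (N : ℕ) (v : Fin N → ℤ) :
    (∃ σ : Equiv.Perm (Fin N), (lexPairs N).foldl sortStep v = v ∘ σ) ∧
    Monotone ((lexPairs N).foldl sortStep v) ∧
    (lexPairs N).length = N * N := by
  refine ⟨DLS.perm_fold _ v, ?_, ?_⟩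
  · -- monotone
    rcases Nat.eq_zero_or_pos N with hN | hN
    · subst hN
      intro a b _
      exact a.elim0
    · have : Nonempty (Fin N) := ⟨⟨0, hN⟩⟩
      obtain ⟨b0, hb0⟩ := Finite.exists_max v
      set T := v b0 with hT
      have h0 : DLS.RowInv T 0 v :=
        ⟨fun a b _ hb => absurd hb (Nat.not_lt_zero _), hb0, ⟨b0, rfl⟩,
          fun _ h => absurd h (lt_irrefl 0)⟩
      have hfin := DLS.outer_inv T (List.finRange N) 0 v List.drop_zero.symm (Nat.zero_le _) h0
      rw [DLS.fold_eq]
      intro a b hab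
      exact hfin.1 a b hab b.isLt
  · -- length
    simp [lexPairs, List.length_flatMap, Function.comp_def, List.map_const',
      List.sum_replicate, smul_eq_mul]
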